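/- Let (X₁, ..., Xₙ) be a martingale with values in ℝ^d, and let μᵢ be the marginal law of Xᵢ. Then there exists a Markov martingale (X̃₁, ..., X̃ₙ) (a process that is both a Markov chain and a martingale) such that X̃ᵢ has law μᵢ for all i = 1, ..., n. -/

import Mathlib

open MeasureTheory Set

open MeasureTheory Set ProbabilityTheory

namespace MarkovMartingaleAux

variable {α β γ : Type*} [MeasurableSpace α] [MeasurableSpace β] [MeasurableSpace γ]

lemma map_bind (μ : Measure α) {f : α → Measure β} (hf : Measurable f)
    {g : β → γ} (hg : Measurable g) :
    (μ.bind f).map g = μ.bind fun a => (f a).map g := by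
  ext s hs
  rw [Measure.map_apply hg hs, Measure.bind_apply (hg hs) hf.aemeasurable,
    Measure.bind_apply hs (show Measurable fun a => (f a).map g from
      (Measure.measurable_map g hg).comp hf).aemeasurable]
  exact lintegral_congr fun a => (Measure.map_apply hg hs).symm

lemma bind_map (μ : Measure α) {f : α → β} (hf : Measurable f)
    {g : β → Measure γ} (hg : Measurable g) :
    (μ.map f).bind g = μ.bind fun a => g (f a) := by
  ext s hs
  rw [Measure.bind_apply hs hg.aemeasurable,
    lintegral_map (show Measurable fun b => g b s from (Measure.measurable_coe hs).comp hg) hf,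
    Measure.bind_apply hs (show Measurable fun a => g (f a) from hg.comp hf).aemeasurable]

variable {E : Type*} [MeasurableSpace E]

/-- One step of the Markov chain construction : given the trajectory `ω`, sample the next point
from `κ (ω k)` and put it in coordinate `k+1`. -/
noncomputable def step (κ : Kernel E E) (k : ℕ) (ω : ℕ → E) : Measure (ℕ → E) :=
  (κ (ω k)).map (Function.update ω (k + 1))

lemma measurable_step (κ : Kernel E E) [IsSFiniteKernel κ] (k : ℕ) :
    Measurable (step κ k) := by
  rw [Measure.measurable_measure]
  intro s hs
  have hu : MeasurableSet {p : (ℕ → E) × E | Function.update p.1 (k + 1) p.2 ∈ s} :=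
    measurable_update' hs
  have h := Kernel.measurable_kernel_prodMk_left
    (κ := κ.comap (fun ω : ℕ → E => ω k) (measurable_pi_apply k)) hu
  simp only [Kernel.comap_apply] at h
  have : ∀ ω : ℕ → E, step κ k ω s = κ (ω k) {x | (ω, x) ∈ {p : (ℕ → E) × E |
      Function.update p.1 (k + 1) p.2 ∈ s}} := by
    intro ω
    rw [step, Measure.map_apply (measurable_update _) hs]
    rfl
  simpa [this] using h

instance step_isProbabilityMeasure (κ : Kernel E E) [IsMarkovKernel κ] (k : ℕ) (ω : ℕ → E) :
    IsProbabilityMeasure (step κ k ω) := by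
  rw [step]
  exact Measure.isProbabilityMeasure_map (measurable_update _).aemeasurable

/-- The Markov chain with initial law `μ0` and transition kernels `κ`, as a measure on
trajectories `ℕ → E`; coordinates beyond the current time are frozen. -/
noncomputable def chain (κ : ℕ → Kernel E E) (μ0 : Measure E) : ℕ → Measure (ℕ → E)
  | 0 => μ0.map (fun x _ => x)
  | (k + 1) => (chain κ μ0 k).bind (step (κ k) k)

variable {κ : ℕ → Kernel E E} [∀ k, IsMarkovKernel (κ k)] {μ0 : Measure E}
  [IsProbabilityMeasure μ0]

instance chain_isProbabilityMeasure (κ : ℕ → Kernel E E) [∀ k, IsMarkovKernel (κ k)]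
    (μ0 : Measure E) [IsProbabilityMeasure μ0] (k : ℕ) :
    IsProbabilityMeasure (chain κ μ0 k) := by
  induction k with
  | zero =>
    exact Measure.isProbabilityMeasure_map (measurable_pi_lambda _ fun _ => measurable_id).aemeasurable
  | succ k ih =>
    constructor
    rw [chain, Measure.bind_apply MeasurableSet.univ (measurable_step _ _).aemeasurable]
    simp [measure_univ]

/-- If `g` only depends on coordinates `≤ k`, its law under `chain κ μ0 m` does not depend on
`m ≥ k`. -/
lemma chain_map_invariant {k : ℕ} {g : (ℕ → E) → γ} (hg : Measurable g)
    (hdep : ∀ ω ω' : ℕ → E, (∀ j, j ≤ k → ω j = ω' j) → g ω = g ω') :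
    ∀ m, k ≤ m → (chain κ μ0 m).map g = (chain κ μ0 k).map g := by
  intro m hm
  induction m, hm using Nat.le_induction with
  | base => rfl
  | succ m hm ih =>
    rw [show chain κ μ0 (m + 1) = (chain κ μ0 m).bind (step (κ m) m) from rfl,
      map_bind _ (measurable_step _ _) hg]
    have hstep : ∀ ω : ℕ → E, (step (κ m) m ω).map g = Measure.dirac (g ω) := by
      intro ω
      rw [step, Measure.map_map hg (measurable_update _)]
      have : g ∘ Function.update ω (m + 1) = fun _ => g ω := by
        funext x
        exact hdep _ _ fun j hj => Function.update_of_ne (by omega) _ _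
      rw [this, Measure.map_const, measure_univ, one_smul]
    simp_rw [hstep]
    rw [Measure.bind_dirac_eq_map _ hg]
    exact ih

lemma chain_map_eval_succ (k : ℕ) :
    (chain κ μ0 (k + 1)).map (fun ω => ω (k + 1))
      = ((chain κ μ0 k).map (fun ω => ω k)).bind (κ k) := by
  rw [show chain κ μ0 (k + 1) = (chain κ μ0 k).bind (step (κ k) k) from rfl,
    map_bind _ (measurable_step _ _) (measurable_pi_apply _),
    bind_map _ (measurable_pi_apply k) (κ k).measurable]
  have : ∀ ω : ℕ → E, (step (κ k) k ω).map (fun ω' => ω' (k + 1)) = κ k (ω k) := by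
    intro ω
    rw [step, Measure.map_map (measurable_pi_apply _) (measurable_update _)]
    have : (fun ω' : ℕ → E => ω' (k + 1)) ∘ Function.update ω (k + 1) = fun x => x := by
      funext x; exact Function.update_self _ _ _
    rw [this, Measure.map_id']
  simp_rw [this]

/-- Projection on coordinates `0, …, k`. -/
def zproj (k : ℕ) (ω : ℕ → E) : Fin (k + 1) → E := fun j => ω j

lemma measurable_zproj (k : ℕ) : Measurable (zproj (E := E) k) :=
  measurable_pi_lambda _ fun _ => measurable_pi_apply _

lemma chain_map_pair (k : ℕ) :
    (chain κ μ0 (k + 1)).map (fun ω => (zproj k ω, ω (k + 1)))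
      = ((chain κ μ0 k).map (zproj k)) ⊗ₘ
        ((κ k).comap (fun z : Fin (k + 1) → E => z ⟨k, Nat.lt_succ_self k⟩)
          (measurable_pi_apply _)) := by
  have hT : Measurable (fun ω : ℕ → E => (zproj k ω, ω (k + 1))) :=
    (measurable_zproj k).prodMk (measurable_pi_apply _)
  haveI : IsProbabilityMeasure ((chain κ μ0 k).map (zproj (E := E) k)) :=
    Measure.isProbabilityMeasure_map (measurable_zproj k).aemeasurable
  ext s hs
  rw [Measure.map_apply hT hs,
    show chain κ μ0 (k + 1) = (chain κ μ0 k).bind (step (κ k) k) from rfl,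
    Measure.bind_apply (hT hs) (measurable_step _ _).aemeasurable, Measure.compProd_apply hs,
    lintegral_map (Kernel.measurable_kernel_prodMk_left hs) (measurable_zproj k)]
  refine lintegral_congr fun ω => ?_
  rw [step, Measure.map_apply (measurable_update _) (hT hs), Kernel.comap_apply]
  have hzk : zproj k ω ⟨k, Nat.lt_succ_self k⟩ = ω k := rfl
  rw [hzk]
  congr 1
  ext x
  simp only [Set.mem_preimage, Set.mem_setOf_eq]
  have h1 : zproj k (Function.update ω (k + 1) x) = zproj k ω := by
    funext j
    exact Function.update_of_ne (by omega) _ _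
  have h2 : Function.update ω (k + 1) x (k + 1) = x := Function.update_self _ _ _
  show (zproj k (Function.update ω (k + 1) x), Function.update ω (k + 1) x (k + 1)) ∈ s ↔ _
  rw [h1, h2]

/-- The defining property of `condDistrib` as a disintegration, in `bind` form. -/
lemma map_eq_bind_condDistrib {Ω' : Type*} [MeasurableSpace Ω'] [StandardBorelSpace Ω']
    [Nonempty Ω'] (μ : Measure α) [IsFiniteMeasure μ] {X : α → β} {Y : α → Ω'}
    (hX : Measurable X) (hY : Measurable Y) :
    (μ.map X).bind (condDistrib Y X μ) = μ.map Y := by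
  ext s hs
  rw [Measure.bind_apply hs (condDistrib Y X μ).measurable.aemeasurable,
    lintegral_map (Kernel.measurable_coe _ hs) hX, Measure.map_apply hY hs]
  have h := setLIntegral_preimage_condDistrib (μ := μ) hX hY.aemeasurable hs MeasurableSet.univ
  simpa [Set.preimage_univ, Measure.restrict_univ, Set.univ_inter] using h

end MarkovMartingaleAux

open MarkovMartingaleAux ProbabilityTheory

/-- Given an `ℝ^d`-valued martingale `(X₁,…,Xₙ)` with marginal laws `μᵢ`, there exists a
Markov martingale `(X̃₁,…,X̃ₙ)` with the same marginal laws.  The Markov property is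
expressed by: the conditional expectation of any indicator of `X̃_{i+1}` given the past
`σ(X̃₁,…,X̃ᵢ)` coincides (a.e.) with the one given `σ(X̃ᵢ)` alone. -/
theorem exists_markov_martingale_same_marginals (d n : ℕ)
    {Ω : Type*} [MeasurableSpace Ω] (P : Measure Ω) [IsProbabilityMeasure P]
    (X : Fin n → Ω → (Fin d → ℝ))
    (hmeas : ∀ i, Measurable (X i)) (hint : ∀ i, Integrable (X i) P)
    (hmart : ∀ (i : Fin n) (h : (i : ℕ) + 1 < n),
      P[X ⟨(i : ℕ) + 1, h⟩ |
          ⨆ j : Fin n, ⨆ _ : j ≤ i, MeasurableSpace.comap (X j) inferInstance]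
        =ᵐ[P] X i) :
    ∃ (Ω' : Type) (_ : MeasurableSpace Ω') (P' : Measure Ω'), IsProbabilityMeasure P' ∧
      ∃ Y : Fin n → Ω' → (Fin d → ℝ),
        (∀ i, Measurable (Y i)) ∧ (∀ i, Integrable (Y i) P') ∧
        (∀ i, P'.map (Y i) = P.map (X i)) ∧
        (∀ (i : Fin n) (h : (i : ℕ) + 1 < n),
          P'[Y ⟨(i : ℕ) + 1, h⟩ |
              ⨆ j : Fin n, ⨆ _ : j ≤ i, MeasurableSpace.comap (Y j) inferInstance]
            =ᵐ[P'] Y i) ∧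
        (∀ (i : Fin n) (h : (i : ℕ) + 1 < n) (s : Set (Fin d → ℝ)), MeasurableSet s →
          P'[(fun ω => s.indicator (fun _ => (1 : ℝ)) (Y ⟨(i : ℕ) + 1, h⟩ ω)) |
              ⨆ j : Fin n, ⨆ _ : j ≤ i, MeasurableSpace.comap (Y j) inferInstance]
            =ᵐ[P']
          P'[(fun ω => s.indicator (fun _ => (1 : ℝ)) (Y ⟨(i : ℕ) + 1, h⟩ ω)) |
              MeasurableSpace.comap (Y i) inferInstance]) := by
  classical
  rcases Nat.eq_zero_or_pos n with hn | hn
  · subst hn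
    exact ⟨Unit, inferInstance, Measure.dirac (), inferInstance, fun i => i.elim0,
      fun i => i.elim0, fun i => i.elim0, fun i => i.elim0, fun i => i.elim0, fun i => i.elim0⟩
  -- abbreviations
  set X' : ℕ → Ω → (Fin d → ℝ) := fun m => if h : m < n then X ⟨m, h⟩ else fun _ => 0 with hX'def
  have hX'eq : ∀ (m : ℕ) (h : m < n), X' m = X ⟨m, h⟩ := fun m h => by
    simp only [hX'def, dif_pos h]
  have hX'meas : ∀ m, Measurable (X' m) := by
    intro m
    simp only [hX'def]
    split_ifs with h
    exacts [hmeas _, measurable_const]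
  have hX'int : ∀ m, Integrable (X' m) P := by
    intro m
    simp only [hX'def]
    split_ifs with h
    exacts [hint _, integrable_const _]
  set κ : ℕ → Kernel (Fin d → ℝ) (Fin d → ℝ) :=
    fun m => condDistrib (X' (m + 1)) (X' m) P with hκdef
  haveI hκM : ∀ m, IsMarkovKernel (κ m) := fun m => by
    rw [hκdef]; infer_instance
  set μ0 : Measure (Fin d → ℝ) := P.map (X' 0) with hμ0def
  haveI : IsProbabilityMeasure μ0 := Measure.isProbabilityMeasure_map (hX'meas 0).aemeasurable
  set P' : Measure (ℕ → Fin d → ℝ) := chain κ μ0 (n - 1) with hP'def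
  haveI hP'prob : IsProbabilityMeasure P' := by
    rw [hP'def]; infer_instance
  set Y : Fin n → (ℕ → Fin d → ℝ) → (Fin d → ℝ) := fun i ω => ω (i : ℕ) with hYdef
  have hYmeas : ∀ i, Measurable (Y i) := fun i => measurable_pi_apply _
  -- marginals of the chain
  have hchain_marg : ∀ m, (chain κ μ0 m).map (fun ω => ω m) = P.map (X' m) := by
    intro m
    induction m with
    | zero =>
      show (μ0.map (fun x _ => x)).map (fun ω => ω 0) = P.map (X' 0)
      rw [Measure.map_map (measurable_pi_apply 0)
        (show Measurable fun (x : Fin d → ℝ) (_ : ℕ) => x from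
          measurable_pi_lambda _ fun _ => measurable_id)]
      exact Measure.map_id'
    | succ m ih =>
      rw [chain_map_eval_succ, ih, hκdef]
      exact map_eq_bind_condDistrib P (hX'meas m) (hX'meas (m + 1))
  -- invariance
  have hinv : ∀ {γ : Type} [MeasurableSpace γ] (k : ℕ), k ≤ n - 1 →
      ∀ (g : (ℕ → Fin d → ℝ) → γ), Measurable g →
      (∀ ω ω', (∀ j, j ≤ k → ω j = ω' j) → g ω = g ω') →
      P'.map g = (chain κ μ0 k).map g := by
    intro γ _ k hk g hg hdep
    rw [hP'def]
    exact chain_map_invariant hg hdep (n - 1) hk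
  have hP'marg : ∀ m, m < n → P'.map (fun ω => ω m) = P.map (X' m) := by
    intro m hm
    rw [hinv m (by omega) _ (measurable_pi_apply m) (fun ω ω' hj => hj m le_rfl), hchain_marg]
  have hmarg : ∀ i : Fin n, P'.map (Y i) = P.map (X i) := by
    intro i
    have h1 : P'.map (Y i) = P.map (X' (i : ℕ)) := hP'marg _ i.isLt
    rw [h1, hX'eq _ i.isLt, Fin.eta]
  -- integrability
  have hYint : ∀ i : Fin n, Integrable (Y i) P' := by
    intro i
    have h1 : Integrable (id : (Fin d → ℝ) → (Fin d → ℝ)) (P.map (X i)) :=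
      (integrable_map_measure stronglyMeasurable_id.aestronglyMeasurable
        (hmeas i).aemeasurable).mpr (hint i)
    have h2 : Integrable (id : (Fin d → ℝ) → (Fin d → ℝ)) (P'.map (Y i)) := by
      rw [hmarg i]; exact h1
    exact (integrable_map_measure stronglyMeasurable_id.aestronglyMeasurable
      (hYmeas i).aemeasurable).mp h2
  -- the sup σ-algebra is the σ-algebra of the projection on the first i+1 coordinates
  have hsup : ∀ i : Fin n,
      (⨆ j : Fin n, ⨆ _ : j ≤ i, MeasurableSpace.comap (Y j) inferInstance)
        = MeasurableSpace.comap (zproj (E := Fin d → ℝ) (i : ℕ)) inferInstance := by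
    intro i
    apply le_antisymm
    · refine iSup_le fun j => iSup_le fun hj => ?_
      have hjk : (j : ℕ) < (i : ℕ) + 1 := by
        have := Fin.le_def.mp hj; omega
      have hYj : Y j = (fun z : Fin ((i : ℕ) + 1) → (Fin d → ℝ) => z ⟨(j : ℕ), hjk⟩) ∘
          zproj (i : ℕ) := rfl
      rw [hYj, ← MeasurableSpace.comap_comp]
      exact MeasurableSpace.comap_mono (measurable_iff_comap_le.mp (measurable_pi_apply _))
    · have hpi : (inferInstance : MeasurableSpace (Fin ((i : ℕ) + 1) → (Fin d → ℝ)))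
          = ⨆ j : Fin ((i : ℕ) + 1),
              MeasurableSpace.comap (fun z : Fin ((i : ℕ) + 1) → (Fin d → ℝ) => z j)
                inferInstance := rfl
      rw [hpi, MeasurableSpace.comap_iSup]
      refine iSup_le fun j => ?_
      rw [MeasurableSpace.comap_comp]
      have hlt : (j : ℕ) < n := by
        have h1 := j.isLt; have h2 := i.isLt; omega
      have hcomp : ((fun z : Fin ((i : ℕ) + 1) → (Fin d → ℝ) => z j) ∘ zproj (i : ℕ))
          = Y ⟨(j : ℕ), hlt⟩ := rfl
      rw [hcomp]
      refine le_iSup_of_le ⟨(j : ℕ), hlt⟩ (le_iSup_of_le ?_ le_rfl)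
      simp only [Fin.le_def]
      have := j.isLt; omega
  have hYizp : ∀ i : Fin n,
      MeasurableSpace.comap (Y i) inferInstance
        ≤ MeasurableSpace.comap (zproj (E := Fin d → ℝ) (i : ℕ)) inferInstance := by
    intro i
    have hYi : Y i = (fun z : Fin ((i : ℕ) + 1) → (Fin d → ℝ) =>
        z ⟨(i : ℕ), Nat.lt_succ_self _⟩) ∘ zproj (i : ℕ) := rfl
    rw [hYi, ← MeasurableSpace.comap_comp]
    exact MeasurableSpace.comap_mono (measurable_iff_comap_le.mp (measurable_pi_apply _))
  have hzple : ∀ k : ℕ,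
      MeasurableSpace.comap (zproj (E := Fin d → ℝ) k) inferInstance
        ≤ (inferInstance : MeasurableSpace (ℕ → Fin d → ℝ)) :=
    fun k => measurable_iff_comap_le.mp (measurable_zproj k)
  -- identification of the conditional kernel of the chain
  have hker : ∀ (i : Fin n) (_ : (i : ℕ) + 1 < n),
      ∀ᵐ ω ∂P',
        ((κ (i : ℕ)).comap
            (fun z : Fin ((i : ℕ) + 1) → (Fin d → ℝ) => z ⟨(i : ℕ), Nat.lt_succ_self _⟩)
            (measurable_pi_apply _)) (zproj (i : ℕ) ω)
          = condDistrib (fun ω => ω ((i : ℕ) + 1)) (zproj (i : ℕ)) P' (zproj (i : ℕ) ω) := by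
    intro i h
    have hzm := measurable_zproj (E := Fin d → ℝ) (i : ℕ)
    have hdepz : ∀ ω ω' : ℕ → Fin d → ℝ, (∀ j, j ≤ (i : ℕ) → ω j = ω' j) →
        zproj (E := Fin d → ℝ) (i : ℕ) ω = zproj (i : ℕ) ω' := by
      intro ω ω' hj
      funext j
      exact hj j (by have := j.isLt; omega)
    have hpair : P'.map (fun ω => (zproj (i : ℕ) ω, ω ((i : ℕ) + 1)))
        = (P'.map (zproj (i : ℕ))) ⊗ₘ
          ((κ (i : ℕ)).comap
            (fun z : Fin ((i : ℕ) + 1) → (Fin d → ℝ) => z ⟨(i : ℕ), Nat.lt_succ_self _⟩)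
            (measurable_pi_apply _)) := by
      have h1 : P'.map (fun ω => (zproj (i : ℕ) ω, ω ((i : ℕ) + 1)))
          = (chain κ μ0 ((i : ℕ) + 1)).map (fun ω => (zproj (i : ℕ) ω, ω ((i : ℕ) + 1))) := by
        refine hinv _ (by omega) _ (hzm.prodMk (measurable_pi_apply _)) ?_
        intro ω ω' hj
        have hz := hdepz ω ω' fun j hjle => hj j (by omega)
        have hlast : ω ((i : ℕ) + 1) = ω' ((i : ℕ) + 1) := hj _ le_rfl
        rw [hz, hlast]
      have h3 : (chain κ μ0 (i : ℕ)).map (zproj (i : ℕ)) = P'.map (zproj (i : ℕ)) :=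
        (hinv _ (by omega) _ hzm hdepz).symm
      rw [h1, chain_map_pair, h3]
    have h4 := condDistrib_ae_eq_of_measure_eq_compProd_of_measurable (μ := P') hzm
      (measurable_pi_apply ((i : ℕ) + 1)) hpair
    exact ae_of_ae_map hzm.aemeasurable h4.symm
  -- the mean of the conditional kernel is the identity (martingale property of X)
  have hPid : ∀ (i : Fin n) (_ : (i : ℕ) + 1 < n),
      (fun a => ∫ y, y ∂(κ (i : ℕ)) (X' (i : ℕ) a)) =ᵐ[P] X' (i : ℕ) := by
    intro i h
    have hX'X : X' (i : ℕ) = X i := by rw [hX'eq _ i.isLt, Fin.eta]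
    have hX'succ : X' ((i : ℕ) + 1) = X ⟨(i : ℕ) + 1, h⟩ := hX'eq _ h
    have hMle : (⨆ j : Fin n, ⨆ _ : j ≤ i, MeasurableSpace.comap (X j) inferInstance)
        ≤ (inferInstance : MeasurableSpace Ω) :=
      iSup_le fun j => iSup_le fun _ => measurable_iff_comap_le.mp (hmeas j)
    have hcomap_le : MeasurableSpace.comap (X' (i : ℕ)) inferInstance
        ≤ ⨆ j : Fin n, ⨆ _ : j ≤ i, MeasurableSpace.comap (X j) inferInstance := by
      rw [hX'X]
      exact le_iSup_of_le i (le_iSup_of_le le_rfl le_rfl)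
    have hcle : MeasurableSpace.comap (X' (i : ℕ)) inferInstance
        ≤ (inferInstance : MeasurableSpace Ω) := measurable_iff_comap_le.mp (hX'meas _)
    have h1 := condExp_condExp_of_le (μ := P) (f := X' ((i : ℕ) + 1)) hcomap_le hMle
    have h2 : P[X' ((i : ℕ) + 1) |
        ⨆ j : Fin n, ⨆ _ : j ≤ i, MeasurableSpace.comap (X j) inferInstance]
        =ᵐ[P] X' (i : ℕ) := by
      rw [hX'succ, hX'X]
      exact hmart i h
    have hsm : StronglyMeasurable[MeasurableSpace.comap (X' (i : ℕ)) inferInstance]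
        (X' (i : ℕ)) :=
      Measurable.stronglyMeasurable (fun s hs => ⟨s, hs, rfl⟩)
    have h3 : P[X' ((i : ℕ) + 1) | MeasurableSpace.comap (X' (i : ℕ)) inferInstance]
        =ᵐ[P] X' (i : ℕ) :=
      h1.symm.trans ((condExp_congr_ae h2).trans
        (Filter.EventuallyEq.of_eq (condExp_of_stronglyMeasurable hcle hsm (hX'int _))))
    have h4 := condExp_ae_eq_integral_condDistrib' (μ := P) (hX'meas (i : ℕ)) (hX'int ((i : ℕ) + 1))
    exact h4.symm.trans h3
  refine ⟨ℕ → Fin d → ℝ, inferInstance, P', hP'prob, Y, hYmeas, hYint, hmarg, ?_, ?_⟩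
  · -- martingale property
    intro i h
    rw [hsup i]
    have hzm := measurable_zproj (E := Fin d → ℝ) (i : ℕ)
    have hY1int : Integrable (fun ω : ℕ → Fin d → ℝ => ω ((i : ℕ) + 1)) P' := hYint ⟨_, h⟩
    have hA := condExp_ae_eq_integral_condDistrib' (μ := P')
      (Y := fun ω : ℕ → Fin d → ℝ => ω ((i : ℕ) + 1)) hzm hY1int
    have hB : (fun ω => ∫ y, y ∂condDistrib (fun ω : ℕ → Fin d → ℝ => ω ((i : ℕ) + 1))
          (zproj (i : ℕ)) P' (zproj (i : ℕ) ω))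
        =ᵐ[P'] fun ω => ∫ y, y ∂(κ (i : ℕ)) (ω (i : ℕ)) := by
      filter_upwards [hker i h] with ω hω
      rw [← hω, Kernel.comap_apply]
      rfl
    -- the mean function
    have hg_sm : StronglyMeasurable (fun x => ∫ y, y ∂(κ (i : ℕ)) x) :=
      (measurable_snd.stronglyMeasurable
        (f := fun p : (Fin d → ℝ) × (Fin d → ℝ) => p.2)).integral_kernel_prod_right'
    have h5 : ∀ᵐ x ∂(P.map (X' (i : ℕ))), (∫ y, y ∂(κ (i : ℕ)) x) = x :=
      (ae_map_iff (hX'meas _).aemeasurable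
        (measurableSet_eq_fun hg_sm.measurable measurable_id)).mpr (hPid i h)
    have h6 : ∀ᵐ ω ∂P', (∫ y, y ∂(κ (i : ℕ)) (ω (i : ℕ))) = ω (i : ℕ) := by
      have hmm : P'.map (fun ω => ω (i : ℕ)) = P.map (X' (i : ℕ)) := hP'marg _ i.isLt
      rw [← hmm] at h5
      exact ae_of_ae_map (measurable_pi_apply _).aemeasurable h5
    exact (hA.trans hB).trans h6
  · -- Markov property
    intro i h s hs
    rw [hsup i]
    set f : (Fin d → ℝ) → ℝ := s.indicator (fun _ => (1 : ℝ)) with hfdef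
    have hf_sm : StronglyMeasurable f := stronglyMeasurable_const.indicator hs
    have hzm := measurable_zproj (E := Fin d → ℝ) (i : ℕ)
    have hY1m : Measurable (fun ω : ℕ → Fin d → ℝ => ω ((i : ℕ) + 1)) := measurable_pi_apply _
    have hFint : Integrable (fun ω : ℕ → Fin d → ℝ => f (ω ((i : ℕ) + 1))) P' := by
      have : (fun ω : ℕ → Fin d → ℝ => f (ω ((i : ℕ) + 1)))
          = ((fun ω : ℕ → Fin d → ℝ => ω ((i : ℕ) + 1)) ⁻¹' s).indicator (fun _ => (1 : ℝ)) := by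
        funext ω
        by_cases hω : ω ((i : ℕ) + 1) ∈ s <;> simp [hfdef, Set.indicator_apply, hω]
      rw [this]
      exact (integrable_const _).indicator (hY1m hs)
    have hA := condExp_ae_eq_integral_condDistrib (μ := P')
      (Y := fun ω : ℕ → Fin d → ℝ => ω ((i : ℕ) + 1)) hzm hY1m.aemeasurable hf_sm hFint
    have hB : (fun ω => ∫ y, f y ∂condDistrib (fun ω : ℕ → Fin d → ℝ => ω ((i : ℕ) + 1))
          (zproj (i : ℕ)) P' (zproj (i : ℕ) ω))
        =ᵐ[P'] fun ω => ∫ y, f y ∂(κ (i : ℕ)) (ω (i : ℕ)) := by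
      filter_upwards [hker i h] with ω hω
      rw [← hω, Kernel.comap_apply]
      rfl
    set gs : (Fin d → ℝ) → ℝ := fun x => ∫ y, f y ∂(κ (i : ℕ)) x with hgsdef
    have hgs_sm : StronglyMeasurable gs :=
      (hf_sm.comp_measurable measurable_snd).integral_kernel_prod_right'
    have hgs_bdd : ∀ x, ‖gs x‖ ≤ 1 := by
      intro x
      have hb : ∀ y, ‖f y‖ ≤ 1 := by
        intro y
        by_cases hy : y ∈ s <;> simp [hfdef, Set.indicator_apply, hy]
      calc ‖gs x‖ ≤ 1 * ((κ (i : ℕ) x) Set.univ).toReal :=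
            norm_integral_le_of_norm_le_const (Filter.Eventually.of_forall hb)
        _ = 1 := by simp [measure_univ]
    have hgsY_int : Integrable (fun ω : ℕ → Fin d → ℝ => gs (ω (i : ℕ))) P' := by
      refine Integrable.mono' (integrable_const 1)
        ((hgs_sm.measurable.comp (measurable_pi_apply _)).aestronglyMeasurable)
        (Filter.Eventually.of_forall fun ω => hgs_bdd _)
    have hC := condExp_condExp_of_le (μ := P')
      (f := fun ω : ℕ → Fin d → ℝ => f (ω ((i : ℕ) + 1))) (hYizp i) (hzple (i : ℕ))
    have hD := condExp_congr_ae (μ := P')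
      (m := MeasurableSpace.comap (Y i) inferInstance) (hA.trans hB)
    have hsmY : StronglyMeasurable[MeasurableSpace.comap (Y i) inferInstance]
        (fun ω : ℕ → Fin d → ℝ => gs (ω (i : ℕ))) :=
      hgs_sm.comp_measurable (fun t ht => ⟨t, ht, rfl⟩)
    have hE : P'[(fun ω : ℕ → Fin d → ℝ => gs (ω (i : ℕ))) |
        MeasurableSpace.comap (Y i) inferInstance]
        = fun ω : ℕ → Fin d → ℝ => gs (ω (i : ℕ)) :=
      condExp_of_stronglyMeasurable (measurable_iff_comap_le.mp (hYmeas i)) hsmY hgsY_int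
    have hR : P'[(fun ω : ℕ → Fin d → ℝ => f (ω ((i : ℕ) + 1))) |
        MeasurableSpace.comap (Y i) inferInstance]
        =ᵐ[P'] fun ω : ℕ → Fin d → ℝ => gs (ω (i : ℕ)) :=
      hC.symm.trans (hD.trans (Filter.EventuallyEq.of_eq hE))
    exact (hA.trans hB).trans hR.symm
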